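/- Let s ∈ ℂ with 1/2 < Re(s) < 1. Then the function u ↦ H_s(u) is integrable on (0,1], and ∫_0^1 H_s(u) du = ∫_0^∞ t^{−s}(1+t)^{−s} dt = Γ(1−s)·Γ(2s−1) / Γ(s), where Γ is the complex Gamma function. In particular ∫_0^1 H_{2/3}(u) du = Γ(1/3)² / Γ(2/3). -/

import Mathlib

open MeasureTheory Set Complex

/-- The kernel `H_s(u) = ∑_{k ≥ 0} (k+u)^{-s} (k+1+u)^{-s}`. -/
noncomputable def Hs (s : ℂ) (u : ℝ) : ℂ :=
  ∑' k : ℕ, (((k : ℝ) + u : ℝ) : ℂ) ^ (-s) * (((k : ℝ) + 1 + u : ℝ) : ℂ) ^ (-s)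

noncomputable def fker (s : ℂ) (t : ℝ) : ℂ :=
  (t : ℂ) ^ (-s) * (((1 + t : ℝ)) : ℂ) ^ (-s)

lemma fker_contOn (s : ℂ) : ContinuousOn (fker s) (Set.Ioi 0) := by
  apply ContinuousOn.mul
  · exact ContinuousOn.cpow_const Complex.continuous_ofReal.continuousOn
      (fun a ha => Complex.ofReal_mem_slitPlane.2 ha)
  · exact ContinuousOn.cpow_const (by fun_prop)
      (fun a ha => Complex.ofReal_mem_slitPlane.2 (by simp at ha ⊢; linarith))

lemma fker_norm (s : ℂ) {t : ℝ} (ht : 0 < t) :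
    ‖fker s t‖ = t ^ (-s.re) * (1 + t) ^ (-s.re) := by
  rw [fker, norm_mul,
    Complex.norm_cpow_eq_rpow_re_of_pos ht, Complex.norm_cpow_eq_rpow_re_of_pos (by linarith),
    Complex.neg_re]

lemma fker_integrable {s : ℂ} (h1 : 1 / 2 < s.re) (h2 : s.re < 1) :
    IntegrableOn (fker s) (Set.Ioi 0) := by
  rw [← Set.Ioc_union_Ioi_eq_Ioi (zero_le_one' ℝ)]
  apply IntegrableOn.union
  · apply Integrable.mono' (g := fun t => t ^ (-s.re))
    · exact (intervalIntegral.intervalIntegrable_rpow' (by linarith)).1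
    · exact ((fker_contOn s).mono Set.Ioc_subset_Ioi_self).aestronglyMeasurable measurableSet_Ioc
    · filter_upwards [ae_restrict_mem measurableSet_Ioc] with t ht
      rw [fker_norm s ht.1]
      have h3 : (1 + t) ^ (-s.re) ≤ 1 :=
        Real.rpow_le_one_of_one_le_of_nonpos (by linarith [ht.1]) (by linarith)
      nlinarith [Real.rpow_nonneg (le_of_lt ht.1) (-s.re),
        Real.rpow_nonneg (by linarith [ht.1] : (0:ℝ) ≤ 1 + t) (-s.re)]
  · apply Integrable.mono' (g := fun t => t ^ (-(2 * s.re)))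
    · exact integrableOn_Ioi_rpow_of_lt (by linarith) one_pos
    · exact ((fker_contOn s).mono (Set.Ioi_subset_Ioi zero_le_one)).aestronglyMeasurable
        measurableSet_Ioi
    · filter_upwards [ae_restrict_mem measurableSet_Ioi] with t ht
      have ht1 : (1:ℝ) < t := ht
      have ht0 : (0:ℝ) < t := by linarith
      rw [fker_norm s ht0]
      have h3 : (1 + t) ^ (-s.re) ≤ t ^ (-s.re) :=
        Real.rpow_le_rpow_of_nonpos ht0 (by linarith) (by linarith)
      have h4 : t ^ (-s.re) * t ^ (-s.re) = t ^ (-(2 * s.re)) := by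
        rw [← Real.rpow_add ht0]; ring_nf
      nlinarith [Real.rpow_nonneg (le_of_lt ht0) (-s.re)]

lemma union_Ioc : (⋃ k : ℕ, Set.Ioc (k : ℝ) ((k : ℝ) + 1)) = Set.Ioi 0 := by
  ext x
  simp only [Set.mem_iUnion, Set.mem_Ioc, Set.mem_Ioi]
  constructor
  · rintro ⟨k, hk1, hk2⟩
    have : (0:ℝ) ≤ k := Nat.cast_nonneg k
    linarith
  · intro hx
    refine ⟨⌈x⌉₊ - 1, ?_, ?_⟩
    · have h1 : (⌈x⌉₊ : ℝ) < x + 1 := Nat.ceil_lt_add_one hx.le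
      have h2 : 1 ≤ ⌈x⌉₊ := Nat.one_le_ceil_iff.2 hx
      rw [Nat.cast_sub h2]
      push_cast
      linarith
    · have h2 : 1 ≤ ⌈x⌉₊ := Nat.one_le_ceil_iff.2 hx
      have := Nat.le_ceil x
      rw [Nat.cast_sub h2]
      push_cast
      linarith [Nat.le_ceil x]

lemma shift_integral (g : ℝ → ℂ) (c : ℝ) :
    ∫ u in Set.Ioc (0:ℝ) 1, g (c + u) = ∫ t in Set.Ioc c (c + 1), g t := by
  have h := intervalIntegral.integral_comp_add_left (a := (0:ℝ)) (b := 1) g c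
  rw [add_zero, intervalIntegral.integral_of_le (zero_le_one' ℝ),
    intervalIntegral.integral_of_le (by linarith : c ≤ c + 1)] at h
  simpa using h

lemma shift_integral_norm (g : ℝ → ℂ) (c : ℝ) :
    ∫ u in Set.Ioc (0:ℝ) 1, ‖g (c + u)‖ = ∫ t in Set.Ioc c (c + 1), ‖g t‖ := by
  have h := intervalIntegral.integral_comp_add_left (a := (0:ℝ)) (b := 1) (fun t => ‖g t‖) c
  rw [add_zero, intervalIntegral.integral_of_le (zero_le_one' ℝ),
    intervalIntegral.integral_of_le (by linarith : c ≤ c + 1)] at h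
  simpa using h

lemma shift_integrable {g : ℝ → ℂ} {c : ℝ} (h : IntegrableOn g (Set.Ioc c (c + 1))) :
    IntegrableOn (fun u => g (c + u)) (Set.Ioc (0:ℝ) 1) := by
  have h2 := ((intervalIntegrable_iff_integrableOn_Ioc_of_le (by linarith : c ≤ c + 1)).2
    h).comp_add_left c
  simp only [sub_self, add_sub_cancel_left] at h2
  exact (intervalIntegrable_iff_integrableOn_Ioc_of_le (zero_le_one' ℝ)).1 h2

lemma summable_norm_fker {s : ℂ} (h1 : 1 / 2 < s.re) {u : ℝ} (hu : 0 < u) :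
    Summable (fun k : ℕ => ‖fker s ((k : ℝ) + u)‖) := by
  have hb : Summable (fun n : ℕ => ((n : ℝ) + 1) ^ (-(2 * s.re))) := by
    have h := (Real.summable_nat_rpow (p := -(2 * s.re))).2 (by linarith)
    have h2 := (summable_nat_add_iff 1).2 h
    exact h2.congr (fun n => by push_cast; ring_nf)
  rw [← summable_nat_add_iff 1]
  apply Summable.of_nonneg_of_le (fun k => norm_nonneg _) (fun k => ?_) hb
  have hk : (0:ℝ) < ((k + 1 : ℕ) : ℝ) + u := by positivity
  rw [fker_norm s hk]
  push_cast
  have e1 : ((k:ℝ) + 1 + u) ^ (-s.re) ≤ ((k:ℝ) + 1) ^ (-s.re) :=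
    Real.rpow_le_rpow_of_nonpos (by positivity) (by linarith) (by linarith)
  have e2 : (1 + ((k:ℝ) + 1 + u)) ^ (-s.re) ≤ ((k:ℝ) + 1) ^ (-s.re) :=
    Real.rpow_le_rpow_of_nonpos (by positivity) (by linarith) (by linarith)
  have e3 : ((k:ℝ) + 1) ^ (-s.re) * ((k:ℝ) + 1) ^ (-s.re) = ((k:ℝ) + 1) ^ (-(2 * s.re)) := by
    rw [← Real.rpow_add (by positivity)]; ring_nf
  calc ((k:ℝ) + 1 + u) ^ (-s.re) * (1 + ((k:ℝ) + 1 + u)) ^ (-s.re)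
      ≤ ((k:ℝ) + 1) ^ (-s.re) * ((k:ℝ) + 1) ^ (-s.re) := by
        apply mul_le_mul e1 e2 (Real.rpow_nonneg (by linarith) _)
          (Real.rpow_nonneg (by positivity) _)
    _ = _ := e3

lemma hasSum_fker_Hs {s : ℂ} (h1 : 1 / 2 < s.re) {u : ℝ} (hu : 0 < u) :
    HasSum (fun k : ℕ => fker s ((k : ℝ) + u)) (Hs s u) := by
  have hsum : Summable (fun k : ℕ => fker s ((k : ℝ) + u)) :=
    (summable_norm_fker h1 hu).of_norm
  have heq : Hs s u = ∑' k : ℕ, fker s ((k : ℝ) + u) := by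
    rw [Hs]
    apply tsum_congr
    intro k
    rw [fker]
    have : (1 + ((k:ℝ) + u)) = ((k:ℝ) + 1 + u) := by ring
    rw [this]
  rw [heq]
  exact hsum.hasSum

lemma Ioc_disj : Pairwise (Function.onFun Disjoint (fun k : ℕ => Set.Ioc (k : ℝ) ((k : ℝ) + 1))) := by
  intro i j hij
  rw [Function.onFun, Set.Ioc_disjoint_Ioc]
  rcases hij.lt_or_gt with h | h
  · have : (i : ℝ) + 1 ≤ j := by exact_mod_cast Nat.succ_le_of_lt h
    calc min ((i:ℝ)+1) ((j:ℝ)+1) ≤ (i:ℝ)+1 := min_le_left _ _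
      _ ≤ (j:ℝ) := this
      _ ≤ max (i:ℝ) (j:ℝ) := le_max_right _ _
  · have : (j : ℝ) + 1 ≤ i := by exact_mod_cast Nat.succ_le_of_lt h
    calc min ((i:ℝ)+1) ((j:ℝ)+1) ≤ (j:ℝ)+1 := min_le_right _ _
      _ ≤ (i:ℝ) := this
      _ ≤ max (i:ℝ) (j:ℝ) := le_max_left _ _

lemma hasSum_integrals {s : ℂ} (h1 : 1 / 2 < s.re) (h2 : s.re < 1) :
    HasSum (fun k : ℕ => ∫ u in Set.Ioc (0:ℝ) 1, fker s ((k : ℝ) + u))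
      (∫ t in Set.Ioi (0:ℝ), fker s t) := by
  have h := hasSum_integral_iUnion (μ := volume) (s := fun k : ℕ => Set.Ioc (k:ℝ) ((k:ℝ)+1))
    (fun k => measurableSet_Ioc) Ioc_disj
    (by rw [union_Ioc]; exact fker_integrable h1 h2)
  rw [union_Ioc] at h
  exact h.congr_fun fun k => (shift_integral (fker s) k).symm ▸ rfl

lemma summable_norm_integrals {s : ℂ} (h1 : 1 / 2 < s.re) (h2 : s.re < 1) :
    Summable (fun k : ℕ => ∫ u in Set.Ioc (0:ℝ) 1, ‖fker s ((k : ℝ) + u)‖) := by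
  have h := hasSum_integral_iUnion (μ := volume) (s := fun k : ℕ => Set.Ioc (k:ℝ) ((k:ℝ)+1))
    (f := fun t => ‖fker s t‖) (fun k => measurableSet_Ioc) Ioc_disj
    (by rw [union_Ioc]; exact (fker_integrable h1 h2).norm)
  have h2' := h.summable
  exact h2'.congr fun k => (shift_integral_norm (fker s) k).symm

lemma fker_shift_aesm (s : ℂ) (k : ℕ) :
    AEStronglyMeasurable (fun u : ℝ => fker s ((k : ℝ) + u))
      (volume.restrict (Set.Ioc 0 1)) := by
  apply ContinuousOn.aestronglyMeasurable _ measurableSet_Ioc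
  apply (fker_contOn s).comp (continuous_add_left ((k:ℝ))).continuousOn
  intro u hu
  have : (0:ℝ) < (k:ℝ) + u := by have := hu.1; positivity
  exact this

lemma Hs_integrable {s : ℂ} (h1 : 1 / 2 < s.re) (h2 : s.re < 1) :
    IntegrableOn (fun u : ℝ => Hs s u) (Set.Ioc 0 1) volume := by
  constructor
  · -- AEStronglyMeasurable
    apply aestronglyMeasurable_of_tendsto_ae (u := Filter.atTop)
      (f := fun n u => ∑ k ∈ Finset.range n, fker s ((k : ℝ) + u))
    · intro n
      exact Finset.aestronglyMeasurable_fun_sum _ (fun k _ => fker_shift_aesm s k)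
    · filter_upwards [ae_restrict_mem measurableSet_Ioc] with u hu
      exact (hasSum_fker_Hs h1 hu.1).tendsto_sum_nat
  · -- HasFiniteIntegral
    rw [HasFiniteIntegral]
    have hb : ∀ᵐ u ∂(volume.restrict (Set.Ioc (0:ℝ) 1)),
        (‖Hs s u‖₊ : ENNReal) ≤ ∑' k : ℕ, (‖fker s ((k : ℝ) + u)‖₊ : ENNReal) := by
      filter_upwards [ae_restrict_mem measurableSet_Ioc] with u hu
      have hle : ‖Hs s u‖ ≤ ∑' k : ℕ, ‖fker s ((k : ℝ) + u)‖ := by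
        rw [← (hasSum_fker_Hs h1 hu.1).tsum_eq]
        exact norm_tsum_le_tsum_norm (summable_norm_fker h1 hu.1)
      calc (‖Hs s u‖₊ : ENNReal) = ENNReal.ofReal ‖Hs s u‖ := by
            rw [ofReal_norm, enorm_eq_nnnorm]
        _ ≤ ENNReal.ofReal (∑' k : ℕ, ‖fker s ((k : ℝ) + u)‖) := ENNReal.ofReal_le_ofReal hle
        _ = ∑' k : ℕ, ENNReal.ofReal ‖fker s ((k : ℝ) + u)‖ :=
            ENNReal.ofReal_tsum_of_nonneg (fun k => norm_nonneg _) (summable_norm_fker h1 hu.1)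
        _ = ∑' k : ℕ, (‖fker s ((k : ℝ) + u)‖₊ : ENNReal) := by
            simp_rw [ofReal_norm, enorm_eq_nnnorm]
    calc ∫⁻ u in Set.Ioc (0:ℝ) 1, (‖Hs s u‖₊ : ENNReal)
        ≤ ∫⁻ u in Set.Ioc (0:ℝ) 1, ∑' k : ℕ, (‖fker s ((k : ℝ) + u)‖₊ : ENNReal) :=
          lintegral_mono_ae hb
      _ = ∑' k : ℕ, ∫⁻ u in Set.Ioc (0:ℝ) 1, (‖fker s ((k : ℝ) + u)‖₊ : ENNReal) :=
          lintegral_tsum (fun k => (fker_shift_aesm s k).enorm)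
      _ = ∑' k : ℕ, ENNReal.ofReal (∫ u in Set.Ioc (0:ℝ) 1, ‖fker s ((k : ℝ) + u)‖) := by
          refine tsum_congr fun k => ?_
          rw [ofReal_integral_norm_eq_lintegral_enorm]; rfl
          exact shift_integrable ((fker_integrable h1 h2).mono_set (by
            intro t ht
            have : (0:ℝ) ≤ (k:ℝ) := Nat.cast_nonneg k
            exact lt_of_le_of_lt this ht.1))
      _ = ENNReal.ofReal (∑' k : ℕ, ∫ u in Set.Ioc (0:ℝ) 1, ‖fker s ((k : ℝ) + u)‖) :=
          (ENNReal.ofReal_tsum_of_nonneg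
            (fun k => integral_nonneg fun u => norm_nonneg _)
            (summable_norm_integrals h1 h2)).symm
      _ < ⊤ := ENNReal.ofReal_lt_top

lemma Hs_integral_eq {s : ℂ} (h1 : 1 / 2 < s.re) (h2 : s.re < 1) :
    (∫ u in Set.Ioc (0:ℝ) 1, Hs s u) = ∫ t in Set.Ioi (0:ℝ), fker s t := by
  have hF_int : ∀ k : ℕ, Integrable (fun u : ℝ => fker s ((k : ℝ) + u))
      (volume.restrict (Set.Ioc 0 1)) := by
    intro k
    exact shift_integrable ((fker_integrable h1 h2).mono_set (by
      intro t ht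
      have : (0:ℝ) ≤ (k:ℝ) := Nat.cast_nonneg k
      exact lt_of_le_of_lt this ht.1))
  have h := hasSum_integral_of_summable_integral_norm hF_int (summable_norm_integrals h1 h2)
  have heq : (∫ u in Set.Ioc (0:ℝ) 1, ∑' k : ℕ, fker s ((k : ℝ) + u))
      = ∫ u in Set.Ioc (0:ℝ) 1, Hs s u := by
    apply setIntegral_congr_fun measurableSet_Ioc
    intro u hu
    exact (hasSum_fker_Hs h1 hu.1).tsum_eq
  rw [heq] at h
  exact h.unique (hasSum_integrals h1 h2)

lemma phi_image : (fun x : ℝ => x / (1 - x)) '' Set.Ioo 0 1 = Set.Ioi 0 := by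
  ext t
  constructor
  · rintro ⟨x, hx, rfl⟩
    exact div_pos hx.1 (by linarith [hx.2])
  · intro ht
    have ht' : (0:ℝ) < t := ht
    refine ⟨t / (1 + t), ⟨div_pos ht' (by linarith), ?_⟩, ?_⟩
    · rw [div_lt_one (by linarith)]; linarith
    · field_simp; ring

lemma phi_inj : Set.InjOn (fun x : ℝ => x / (1 - x)) (Set.Ioo 0 1) := by
  intro a ha b hb h
  have h1 : (1:ℝ) - a ≠ 0 := by have := ha.2; intro hc; linarith [(by linarith : (0:ℝ) < 1 - a)]
  have h2 : (1:ℝ) - b ≠ 0 := by have := hb.2; intro hc; linarith [(by linarith : (0:ℝ) < 1 - b)]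
  field_simp at h
  linarith

lemma phi_deriv : ∀ x ∈ Set.Ioo (0:ℝ) 1,
    HasDerivWithinAt (fun x : ℝ => x / (1 - x)) (((1 - x) ^ 2)⁻¹) (Set.Ioo 0 1) x := by
  intro x hx
  have hne : (1:ℝ) - x ≠ 0 := by have := hx.2; intro hc; linarith [(by linarith : (0:ℝ) < 1 - x)]
  have h := (hasDerivAt_id x).div ((hasDerivAt_const x (1:ℝ)).sub (hasDerivAt_id x)) hne
  refine (h.congr_deriv ?_).hasDerivWithinAt
  show (1 * (1 - x) - x * (0 - 1)) / (1 - x) ^ 2 = ((1 - x) ^ 2)⁻¹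
  rw [div_eq_mul_inv]; ring

lemma ofReal_inv_cpow {b : ℝ} (hb : 0 < b) (w : ℂ) :
    (((b⁻¹ : ℝ)) : ℂ) ^ (-w) = ((b : ℝ) : ℂ) ^ w := by
  rw [Complex.ofReal_inv, Complex.inv_cpow _ _ (by
    rw [Complex.arg_ofReal_of_nonneg hb.le]; exact (Real.pi_ne_zero).symm), Complex.cpow_neg, inv_inv]

lemma beta_eval {s : ℂ} (h1 : 1 / 2 < s.re) (h2 : s.re < 1) :
    (∫ t in Set.Ioi (0:ℝ), fker s t)
      = Complex.Gamma (1 - s) * Complex.Gamma (2 * s - 1) / Complex.Gamma s := by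
  have key : (∫ t in Set.Ioi (0:ℝ), fker s t) = Complex.betaIntegral (1 - s) (2 * s - 1) := by
    rw [← phi_image, integral_image_eq_integral_abs_deriv_smul measurableSet_Ioo phi_deriv
      phi_inj (fker s)]
    rw [Complex.betaIntegral, intervalIntegral.integral_of_le (zero_le_one' ℝ),
      MeasureTheory.integral_Ioc_eq_integral_Ioo]
    apply setIntegral_congr_fun measurableSet_Ioo
    intro x hx
    have hx0 : (0:ℝ) < x := hx.1
    have hb : (0:ℝ) < 1 - x := by linarith [hx.2]
    have hbz : ((1 - x : ℝ) : ℂ) ≠ 0 := by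
      simp only [ne_eq, Complex.ofReal_eq_zero]; linarith
    simp only [fker]
    rw [show (1 + x / (1 - x) : ℝ) = ((1 - x)⁻¹ : ℝ) from by field_simp; ring,
      show (x / (1 - x) : ℝ) = x * (1 - x)⁻¹ from div_eq_mul_inv x _]
    rw [Complex.ofReal_mul, Complex.mul_cpow_ofReal_nonneg hx0.le (by positivity),
      ofReal_inv_cpow hb s]
    have habs : |((1 - x) ^ 2)⁻¹| = ((1 - x) ^ 2)⁻¹ := abs_of_pos (by positivity)
    rw [habs, real_smul]
    push_cast
    have hpow : ((1 - (x:ℂ)) ^ 2)⁻¹ * ((x:ℂ) ^ (-s) * (1 - (x:ℂ)) ^ s * (1 - (x:ℂ)) ^ s)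
        = (x:ℂ) ^ (1 - s - 1) * (1 - (x:ℂ)) ^ (2 * s - 1 - 1) := by
      have hz : (1 - (x:ℂ)) ≠ 0 := by
        intro hc
        apply hbz
        rw [Complex.ofReal_sub, Complex.ofReal_one]
        exact hc
      have hexp : (2 * s - 1 - 1 : ℂ) = s + s + (-2) := by ring
      have hexp2 : (1 - s - 1 : ℂ) = -s := by ring
      rw [hexp, hexp2, Complex.cpow_add _ _ hz, Complex.cpow_add _ _ hz]
      have hm2 : (1 - (x:ℂ)) ^ ((-2 : ℂ)) = ((1 - (x:ℂ)) ^ 2)⁻¹ := by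
        rw [Complex.cpow_neg]
        congr 1
        rw [show ((2:ℂ)) = ((2:ℕ):ℂ) by norm_num, Complex.cpow_natCast]
      rw [hm2]
      ring
    rw [hpow]
  rw [key]
  have hre1 : 0 < (1 - s).re := by simp [Complex.sub_re]; linarith
  have hre2 : 0 < (2 * s - 1).re := by
    simp [Complex.sub_re, Complex.mul_re]; linarith
  have hβ := Complex.Gamma_mul_Gamma_eq_betaIntegral hre1 hre2
  have hadd : (1 - s) + (2 * s - 1) = s := by ring
  rw [hadd] at hβ
  have hΓ : Complex.Gamma s ≠ 0 := Complex.Gamma_ne_zero_of_re_pos (by linarith)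
  rw [hβ, mul_div_cancel_left₀ _ hΓ]

theorem stmt6 (s : ℂ) (h1 : 1 / 2 < s.re) (h2 : s.re < 1) :
    IntegrableOn (fun u : ℝ => Hs s u) (Set.Ioc 0 1) volume ∧
    (∫ u in Set.Ioc (0 : ℝ) 1, Hs s u)
      = (∫ t in Set.Ioi (0 : ℝ), (t : ℂ) ^ (-s) * (((1 + t : ℝ)) : ℂ) ^ (-s)) ∧
    (∫ u in Set.Ioc (0 : ℝ) 1, Hs s u)
      = Complex.Gamma (1 - s) * Complex.Gamma (2 * s - 1) / Complex.Gamma s ∧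
    (∫ u in Set.Ioc (0 : ℝ) 1, Hs (2 / 3) u)
      = Complex.Gamma (1 / 3) ^ 2 / Complex.Gamma (2 / 3) := by
  have key23 : ((2 : ℂ) / 3).re = 2 / 3 := by
    have : ((2 : ℂ) / 3) = ((2 / 3 : ℝ) : ℂ) := by norm_num
    rw [this, Complex.ofReal_re]
  have h1' : 1 / 2 < ((2 : ℂ) / 3).re := by rw [key23]; norm_num
  have h2' : ((2 : ℂ) / 3).re < 1 := by rw [key23]; norm_num
  refine ⟨Hs_integrable h1 h2, ?_, ?_, ?_⟩
  · exact Hs_integral_eq h1 h2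
  · rw [Hs_integral_eq h1 h2]; exact beta_eval h1 h2
  · rw [Hs_integral_eq h1' h2', beta_eval h1' h2']
    rw [show (1 - 2 / 3 : ℂ) = 1 / 3 by norm_num, show (2 * (2 / 3) - 1 : ℂ) = 1 / 3 by norm_num,
      sq]
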